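/- Let d ∈ ℕ with d ≥ 1. For each n ∈ ℕ let A_n be a unital C*-algebra with a faithful state φ_n, and let A_∞ be a unital C*-algebra with a faithful state φ_∞. For each n ∈ ℕ ∪ {∞} let X^(n) be a d-tuple of elements of the corresponding algebra. Assume the uniform RD property (there exist C > 0, D > 0 with ‖P(X^(n))‖ ≤ C·(deg P + 1)^D·(φ_n(P(X^(n))* P(X^(n))))^{1/2} for all n ∈ ℕ and all *-polynomials P) and convergence in non-commutative *-distribution (φ_n(P(X^(n))) → φ_∞(P(X^(∞))) for every *-polynomial P). Then for every self-adjoint *-polynomial P (one satisfying P* = P, so that P(X^(n)) is self-adjoint for every n), the spectra converge in Hausdorff distance: hausdorffDist(σ(P(X^(n))), σ(P(X^(∞)))) → 0 as n → ∞, where σ denotes the spectrum as a compact subset of ℝ. -/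

import Mathlib

open Filter ComplexOrder

/-- A state on a unital C*-algebra: a linear functional which is unital and positive. -/
def IsState {A : Type*} [CStarAlgebra A] (φ : A →ₗ[ℂ] ℂ) : Prop :=
  φ 1 = 1 ∧ ∀ x : A, 0 ≤ φ (star x * x)

/-- A state is faithful if `φ (x* x) = 0` implies `x = 0`. -/
def IsFaithful {A : Type*} [CStarAlgebra A] (φ : A →ₗ[ℂ] ℂ) : Prop :=
  ∀ x : A, φ (star x * x) = 0 → x = 0

/-- Evaluation of a word in the letters `X_1,…,X_d, X_1*,…,X_d*` (the Boolean flag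
indicates a starred letter) at a `d`-tuple of elements of a C*-algebra. -/
def evalWord {d : ℕ} {A : Type*} [Ring A] [StarRing A] (x : Fin d → A)
    (w : List (Fin d × Bool)) : A :=
  (w.map fun p => if p.2 then star (x p.1) else x p.1).prod

/-- A *-polynomial in `d` variables is a finitely supported ℂ-linear combination of words;
this is its evaluation at a `d`-tuple. -/
noncomputable def evalPoly {d : ℕ} {A : Type*} [Ring A] [StarRing A] [Algebra ℂ A]
    (P : List (Fin d × Bool) →₀ ℂ) (x : Fin d → A) : A :=
  P.sum fun w c => c • evalWord x w

/-- The degree of a *-polynomial: the maximal length of a word with nonzero coefficient. -/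
def degPoly {d : ℕ} (P : List (Fin d × Bool) →₀ ℂ) : ℕ :=
  P.support.sup List.length

/-- The formal adjoint of a word: reverse the word and flip all stars. -/
def starWord {d : ℕ} (w : List (Fin d × Bool)) : List (Fin d × Bool) :=
  (w.map fun p => (p.1, !p.2)).reverse

/-- A *-polynomial is self-adjoint if `P* = P`, i.e. the coefficient of the adjoint of each
word is the complex conjugate of the coefficient of the word. -/
def IsSelfAdjointPoly {d : ℕ} (P : List (Fin d × Bool) →₀ ℂ) : Prop :=
  ∀ w : List (Fin d × Bool), P (starWord w) = starRingEnd ℂ (P w)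

namespace SHC

variable {d : ℕ} {A : Type*} [Ring A] [StarRing A] [Algebra ℂ A] (x : Fin d → A)

/-- The word evaluation as a monoid hom on the free monoid. -/
def wordHom : FreeMonoid (Fin d × Bool) →* A :=
  FreeMonoid.lift fun p => if p.2 then star (x p.1) else x p.1

lemma wordHom_apply (w : List (Fin d × Bool)) : wordHom x (FreeMonoid.ofList w) = evalWord x w :=
  FreeMonoid.lift_ofList _ _

/-- Evaluation of *-polynomials as an algebra hom on the monoid algebra. -/
noncomputable def evalHom : MonoidAlgebra ℂ (FreeMonoid (Fin d × Bool)) →ₐ[ℂ] A :=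
  MonoidAlgebra.lift ℂ A _ (wordHom x)

lemma evalHom_eq (Q : MonoidAlgebra ℂ (FreeMonoid (Fin d × Bool))) :
    evalHom x Q = evalPoly Q.coeff x := by
  rw [evalHom, MonoidAlgebra.lift_apply]
  exact Finsupp.sum_congr fun w _ => by
    show _ • (wordHom x) (FreeMonoid.ofList w) = _
    exact congrArg _ (wordHom_apply x w)

def toMA {d : ℕ} (P : List (Fin d × Bool) →₀ ℂ) :
    MonoidAlgebra ℂ (FreeMonoid (Fin d × Bool)) := MonoidAlgebra.ofCoeff P

def ofMA {d : ℕ} (Q : MonoidAlgebra ℂ (FreeMonoid (Fin d × Bool))) :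
    List (Fin d × Bool) →₀ ℂ := Q.coeff

lemma evalPoly_ofMA (Q : MonoidAlgebra ℂ (FreeMonoid (Fin d × Bool))) :
    evalPoly (ofMA Q) x = evalPoly Q.coeff x := rfl

lemma evalPoly_toMA (P : List (Fin d × Bool) →₀ ℂ) :
    evalPoly (toMA P).coeff x = evalPoly P x := rfl

lemma degPoly_ofMA {d : ℕ} (Q : MonoidAlgebra ℂ (FreeMonoid (Fin d × Bool))) :
    degPoly (ofMA Q) = degPoly Q.coeff := rfl

lemma evalPoly_pow (P : MonoidAlgebra ℂ (FreeMonoid (Fin d × Bool))) (m : ℕ) :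
    evalPoly (P ^ m).coeff x = evalPoly P.coeff x ^ m := by
  rw [← evalHom_eq, ← evalHom_eq, map_pow]

lemma degPoly_le_iff {N : ℕ} {P : List (Fin d × Bool) →₀ ℂ} :
    degPoly P ≤ N ↔ ∀ w ∈ P.support, w.length ≤ N := Finset.sup_le_iff

lemma degPoly_mul (P Q : MonoidAlgebra ℂ (FreeMonoid (Fin d × Bool))) :
    degPoly (P * Q).coeff ≤ degPoly P.coeff + degPoly Q.coeff := by
  classical
  refine degPoly_le_iff.mpr ?_
  intro w hw
  have := MonoidAlgebra.support_coeff_mul_subset P Q hw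
  obtain ⟨u, hu, v, hv, rfl⟩ := Finset.mem_mul.mp this
  have h1 : (u : List (Fin d × Bool)).length ≤ degPoly P.coeff := Finset.le_sup hu
  have h2 : (v : List (Fin d × Bool)).length ≤ degPoly Q.coeff := Finset.le_sup hv
  calc ((u * v : FreeMonoid (Fin d × Bool)) : List (Fin d × Bool)).length
      = u.length + v.length := List.length_append
    _ ≤ _ := add_le_add h1 h2

lemma degPoly_pow (P : MonoidAlgebra ℂ (FreeMonoid (Fin d × Bool))) (m : ℕ) :
    degPoly (P ^ m).coeff ≤ m * degPoly P.coeff := by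
  induction m with
  | zero =>
    rw [pow_zero]; refine degPoly_le_iff.mpr ?_
    intro w hw
    have := MonoidAlgebra.support_coeff_one_subset (k := ℂ) (G := FreeMonoid (Fin d × Bool)) hw
    replace this := Finset.mem_one.mp this
    subst this
    have h0 : List.length (1 : FreeMonoid (Fin d × Bool)) = 0 := rfl
    omega
  | succ m ih =>
    calc degPoly (P ^ (m+1)).coeff = degPoly (P ^ m * P).coeff := by rw [pow_succ]
      _ ≤ degPoly (P ^ m).coeff + degPoly P.coeff := degPoly_mul _ _
      _ ≤ m * degPoly P.coeff + degPoly P.coeff := by omega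
      _ = (m+1) * degPoly P.coeff := by ring

end SHC

namespace SHC2
open SHC

variable {d : ℕ} {A : Type*} [Ring A] [StarRing A] [Algebra ℂ A] [StarModule ℂ A] (x : Fin d → A)

lemma evalWord_append (u v : List (Fin d × Bool)) :
    evalWord x (u ++ v) = evalWord x u * evalWord x v := by
  simp [evalWord, List.map_append, List.prod_append]

lemma star_evalWord (w : List (Fin d × Bool)) :
    star (evalWord x w) = evalWord x (starWord w) := by
  induction w with
  | nil => simp [evalWord, starWord]
  | cons p t ih =>
    have h1 : evalWord x (p :: t) = (if p.2 then star (x p.1) else x p.1) * evalWord x t := by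
      simp [evalWord]
    have h2 : starWord (p :: t) = starWord t ++ [(p.1, !p.2)] := by
      simp [starWord]
    rw [h1, star_mul, ih, h2, evalWord_append]
    congr 1
    cases hb : p.2 <;> simp [evalWord, hb]

lemma starWord_starWord (w : List (Fin d × Bool)) : starWord (starWord w) = w := by
  simp [starWord, List.map_reverse, List.reverse_reverse, List.map_map, Function.comp_def,
    Bool.not_not]

lemma isSelfAdjoint_evalPoly {P : List (Fin d × Bool) →₀ ℂ} (hP : IsSelfAdjointPoly P) :
    IsSelfAdjoint (evalPoly P x) := by
  classical
  rw [IsSelfAdjoint, evalPoly, Finsupp.sum, star_sum]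
  refine Finset.sum_nbij' (i := fun w => starWord w) (j := fun w => starWord w) ?_ ?_ ?_ ?_ ?_
  · intro w hw
    rw [Finsupp.mem_support_iff] at hw ⊢
    rw [hP w]
    simpa using hw
  · intro w hw
    rw [Finsupp.mem_support_iff] at hw ⊢
    intro h
    rw [← starWord_starWord w, hP (starWord w), h, map_zero] at hw
    exact hw rfl
  · intro w _; exact starWord_starWord w
  · intro w _; exact starWord_starWord w
  · intro w _
    rw [star_smul, star_evalWord, hP w]
    rfl

end SHC2

namespace SHC3
open SHC Polynomial

variable {d : ℕ} {A : Type*} [CStarAlgebra A] (x : Fin d → A)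

lemma evalPoly_aeval (P : MonoidAlgebra ℂ (FreeMonoid (Fin d × Bool))) (q : Polynomial ℝ) :
    evalPoly (Polynomial.aeval P q : MonoidAlgebra ℂ (FreeMonoid (Fin d × Bool))).coeff x
      = Polynomial.aeval (evalPoly P.coeff x) q := by
  rw [← evalHom_eq, ← evalHom_eq]
  exact (Polynomial.aeval_algHom_apply ((evalHom x).restrictScalars ℝ) P q).symm

lemma evalPoly_aeval_eq_cfc (P : MonoidAlgebra ℂ (FreeMonoid (Fin d × Bool))) (q : Polynomial ℝ)
    (hsa : IsSelfAdjoint (evalPoly P.coeff x)) :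
    evalPoly (Polynomial.aeval P q : MonoidAlgebra ℂ (FreeMonoid (Fin d × Bool))).coeff x
      = cfc (fun t => q.eval t) (evalPoly P.coeff x) := by
  rw [evalPoly_aeval, cfc_polynomial q _ hsa]

variable {φ : A →ₗ[ℂ] ℂ}

lemma state_nontrivial (hφ : IsState φ) : Nontrivial A := by
  refine ⟨0, 1, fun h => ?_⟩
  have := hφ.1
  rw [← h, map_zero] at this
  exact zero_ne_one this

lemma state_map_algebraMap (hφ : IsState φ) (r : ℝ) : φ (algebraMap ℝ A r) = (r : ℂ) := by
  rw [IsScalarTower.algebraMap_apply ℝ ℂ A, Algebra.algebraMap_eq_smul_one, map_smul, hφ.1,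
    smul_eq_mul, mul_one]
  exact congrFun Complex.coe_algebraMap r

lemma state_cfc_nonneg (hφ : IsState φ) {a : A} (ha : IsSelfAdjoint a) {f : ℝ → ℝ}
    (hf : Continuous f) (hf0 : ∀ t ∈ spectrum ℝ a, 0 ≤ f t) : 0 ≤ φ (cfc f a) := by
  set z := cfc (fun t => Real.sqrt (f t)) a with hz_def
  have hz : IsSelfAdjoint z := cfc_predicate _ a
  have hcont : ContinuousOn (fun t => Real.sqrt (f t)) (spectrum ℝ a) :=
    (Real.continuous_sqrt.comp hf).continuousOn
  have key : star z * z = cfc f a := by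
    rw [hz.star_eq, hz_def, ← cfc_mul _ _ a hcont hcont]
    exact cfc_congr fun t ht => Real.mul_self_sqrt (hf0 t ht)
  rw [← key]
  exact hφ.2 z

lemma state_cfc_re_le (hφ : IsState φ) {a : A} (ha : IsSelfAdjoint a) {f : ℝ → ℝ} {c : ℝ}
    (hf : Continuous f) (hb : ∀ t ∈ spectrum ℝ a, f t ≤ c) : (φ (cfc f a)).re ≤ c := by
  have h1 : 0 ≤ φ (cfc (fun t => c - f t) a) :=
    state_cfc_nonneg hφ ha (continuous_const.sub hf) (fun t ht => sub_nonneg.mpr (hb t ht))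
  have h2 : cfc (fun t => c - f t) a = algebraMap ℝ A c - cfc f a := by
    rw [cfc_sub (fun _ => c) f a continuousOn_const hf.continuousOn, cfc_const c a ha]
  rw [h2, map_sub, state_map_algebraMap hφ] at h1
  have := (Complex.le_def.mp h1).1
  simpa using this

lemma state_cfc_re_ge (hφ : IsState φ) {a : A} (ha : IsSelfAdjoint a) {f : ℝ → ℝ} {c : ℝ}
    (hf : Continuous f) (hb : ∀ t ∈ spectrum ℝ a, c ≤ f t) : c ≤ (φ (cfc f a)).re := by
  have h1 : 0 ≤ φ (cfc (fun t => f t - c) a) :=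
    state_cfc_nonneg hφ ha (hf.sub continuous_const) (fun t ht => sub_nonneg.mpr (hb t ht))
  have h2 : cfc (fun t => f t - c) a = cfc f a - algebraMap ℝ A c := by
    rw [cfc_sub f (fun _ => c) a hf.continuousOn continuousOn_const, cfc_const c a ha]
  rw [h2, map_sub, state_map_algebraMap hφ] at h1
  have := (Complex.le_def.mp h1).1
  simpa using this

lemma norm_pow_two_pow {a : A} (ha : IsSelfAdjoint a) (j : ℕ) :
    ‖a ^ (2^j : ℕ)‖ = ‖a‖ ^ (2^j : ℕ) := by
  induction j with
  | zero => simp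
  | succ j ih =>
    have h1 : a ^ (2^(j+1) : ℕ) = (a ^ (2^j : ℕ)) * (a ^ (2^j : ℕ)) := by
      rw [← pow_add]; congr 1; ring
    have hb : IsSelfAdjoint (a ^ (2^j : ℕ)) := ha.pow _
    have h2 : ‖a ^ (2^j : ℕ) * a ^ (2^j : ℕ)‖ = ‖a ^ (2^j : ℕ)‖ * ‖a ^ (2^j : ℕ)‖ :=
      calc ‖a ^ (2^j : ℕ) * a ^ (2^j : ℕ)‖ = ‖star (a ^ (2^j : ℕ)) * a ^ (2^j : ℕ)‖ := by
            rw [hb.star_eq]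
        _ = ‖a ^ (2^j : ℕ)‖ * ‖a ^ (2^j : ℕ)‖ := CStarRing.norm_star_mul_self
    rw [h1, h2, ih, ← pow_add]
    congr 1
    ring

end SHC3

namespace SHC4
open SHC SHC2 SHC3 Polynomial Metric

lemma spec_real_nonempty {A : Type*} [CStarAlgebra A] [Nontrivial A] {w : A}
    (hw : IsSelfAdjoint w) : (spectrum ℝ w).Nonempty := by
  obtain ⟨z, hz⟩ := spectrum.nonempty w
  have hz' : (z.re : ℂ) ∈ spectrum ℂ w := by rw [← hw.mem_spectrum_eq_re hz]; exact hz
  exact ⟨z.re, (spectrum.algebraMap_mem_iff ℂ).mp hz'⟩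

lemma spectrum_subset_Icc {A : Type*} [CStarAlgebra A] [Nontrivial A] {w : A} {M : ℝ}
    (hM : ‖w‖ ≤ M) : spectrum ℝ w ⊆ Set.Icc (-M) M := by
  intro t ht
  have h := spectrum.norm_le_norm_of_mem ht
  rw [Real.norm_eq_abs] at h
  have h2 := abs_le.mp (h.trans hM)
  exact ⟨h2.1, h2.2⟩

lemma isSelfAdjoint_aeval {A : Type*} [CStarAlgebra A] {w : A} (hw : IsSelfAdjoint w)
    (q : Polynomial ℝ) : IsSelfAdjoint (Polynomial.aeval w q) := by
  rw [← cfc_polynomial q w hw]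
  exact cfc_predicate _ w

lemma aeval_eq_cfc {A : Type*} [CStarAlgebra A] {w : A} (hw : IsSelfAdjoint w) (q : Polynomial ℝ) :
    Polynomial.aeval w q = cfc (fun t => Polynomial.eval t q) w :=
  (cfc_polynomial q w hw).symm

lemma aeval_pow_eq_cfc {A : Type*} [CStarAlgebra A] {w : A} (hw : IsSelfAdjoint w)
    (q : Polynomial ℝ) (m : ℕ) :
    (Polynomial.aeval w q) ^ m = cfc (fun t => (Polynomial.eval t q) ^ m) w := by
  rw [aeval_eq_cfc hw q, ← cfc_pow (fun t => Polynomial.eval t q) m w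
    (Polynomial.continuous q).continuousOn]

lemma aeval_mul_eq_cfc {E : Type*} [CStarAlgebra E] (r : Polynomial ℝ) (w : E)
    (hw : IsSelfAdjoint w) :
    Polynomial.aeval w (r*r) = cfc (fun s => Polynomial.eval s r * Polynomial.eval s r) w := by
  rw [map_mul, aeval_eq_cfc hw r,
    ← cfc_mul (fun s => Polynomial.eval s r) (fun s => Polynomial.eval s r) w
      (Polynomial.continuous r).continuousOn (Polynomial.continuous r).continuousOn]

theorem aux
    {A : ℕ → Type*} [∀ n, CStarAlgebra (A n)]
    {B : Type*} [CStarAlgebra B]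
    (φ : ∀ n, A n →ₗ[ℂ] ℂ) (ψ : B →ₗ[ℂ] ℂ)
    (hφ : ∀ n, IsState (φ n)) (hψ : IsState ψ) (hψf : IsFaithful ψ)
    (a : ∀ n, A n) (b : B)
    (hsa : ∀ n, IsSelfAdjoint (a n)) (hsb : IsSelfAdjoint b)
    (C D : ℝ) (hC : 0 < C) (hD : 0 < D)
    (hRD : ∀ q : Polynomial ℝ, ∃ K : ℕ, ∀ (n : ℕ) (m : ℕ),
      ‖(Polynomial.aeval (a n) q) ^ m‖ ≤ C * (((m * K + 1 : ℕ) : ℝ)) ^ D *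
        Real.sqrt ((φ n (Polynomial.aeval (a n) (q ^ (2*m)))).re))
    (conv : ∀ q : Polynomial ℝ, Tendsto (fun n => (φ n (Polynomial.aeval (a n) q)).re)
      atTop (nhds ((ψ (Polynomial.aeval b q)).re))) :
    Tendsto (fun n => Metric.hausdorffDist (spectrum ℝ (a n)) (spectrum ℝ b)) atTop (nhds 0) := by
  classical
  haveI : Nontrivial B := state_nontrivial hψ
  have hAnt : ∀ n, Nontrivial (A n) := fun n => state_nontrivial (hφ n)
  -- uniform norm bound
  obtain ⟨K₀, hK₀⟩ := hRD (Polynomial.X : Polynomial ℝ)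
  have hconv2 := conv ((Polynomial.X : Polynomial ℝ) ^ 2)
  set v : ℝ := (ψ (Polynomial.aeval b ((Polynomial.X : Polynomial ℝ) ^ 2))).re with hv
  set M : ℝ := max (C * (((1 * K₀ + 1 : ℕ) : ℝ)) ^ D * Real.sqrt (v + 1)) ‖b‖ with hM
  have hMb : ‖b‖ ≤ M := le_max_right _ _
  have hM0 : 0 ≤ M := le_trans (norm_nonneg b) hMb
  have hMn : ∀ᶠ n in atTop, ‖a n‖ ≤ M := by
    have hev : ∀ᶠ n in atTop, (φ n (Polynomial.aeval (a n) ((Polynomial.X : Polynomial ℝ) ^ 2))).re < v + 1 :=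
      hconv2.eventually (eventually_lt_nhds (lt_add_one v))
    filter_upwards [hev] with n hn
    have h := hK₀ n 1
    have hx2 : (Polynomial.X : Polynomial ℝ) ^ (2*1) = Polynomial.X ^ 2 := by norm_num
    rw [pow_one, hx2, Polynomial.aeval_X] at h
    have hle : Real.sqrt ((φ n (Polynomial.aeval (a n) ((Polynomial.X : Polynomial ℝ) ^ 2))).re)
        ≤ Real.sqrt (v + 1) := Real.sqrt_le_sqrt hn.le
    have hpos : (0:ℝ) ≤ C * (((1 * K₀ + 1 : ℕ) : ℝ)) ^ D := by positivity
    calc ‖a n‖ ≤ C * (((1 * K₀ + 1 : ℕ) : ℝ)) ^ D *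
          Real.sqrt ((φ n (Polynomial.aeval (a n) ((Polynomial.X : Polynomial ℝ) ^ 2))).re) := h
      _ ≤ C * (((1 * K₀ + 1 : ℕ) : ℝ)) ^ D * Real.sqrt (v + 1) := by
          exact mul_le_mul_of_nonneg_left hle hpos
      _ ≤ M := le_max_left _ _
  have hbne : (spectrum ℝ b).Nonempty := spec_real_nonempty hsb
  have hbIcc : spectrum ℝ b ⊆ Set.Icc (-M) M := spectrum_subset_Icc hMb
  -- hard direction
  have hard : ∀ ε : ℝ, 0 < ε → ∀ᶠ n in atTop,
      ∀ lam ∈ spectrum ℝ (a n), Metric.infDist lam (spectrum ℝ b) < ε := by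
    intro ε hε
    set f : ℝ → ℝ := fun s => max 0 (min 1 ((2/ε) * (Metric.infDist s (spectrum ℝ b) - ε/2)))
      with hf_def
    have hfc : Continuous f :=
      continuous_const.max (continuous_const.min
        (continuous_const.mul ((Metric.continuous_infDist_pt (spectrum ℝ b)).sub continuous_const)))
    have hf0 : ∀ s ∈ spectrum ℝ b, f s = 0 := by
      intro s hs
      have h0 : Metric.infDist s (spectrum ℝ b) = 0 := Metric.infDist_zero_of_mem hs
      have h1 : (2/ε) * (Metric.infDist s (spectrum ℝ b) - ε/2) = -1 := by
        rw [h0]; field_simp; ring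
      simp only [hf_def, h1]
      norm_num
    have hf1 : ∀ s, ε ≤ Metric.infDist s (spectrum ℝ b) → f s = 1 := by
      intro s hs
      have h1 : (1:ℝ) ≤ (2/ε) * (Metric.infDist s (spectrum ℝ b) - ε/2) := by
        have h2 : ε/2 ≤ Metric.infDist s (spectrum ℝ b) - ε/2 := by linarith
        calc (1:ℝ) = (2/ε) * (ε/2) := by field_simp
          _ ≤ (2/ε) * (Metric.infDist s (spectrum ℝ b) - ε/2) :=
            mul_le_mul_of_nonneg_left h2 (by positivity)
      simp only [hf_def]
      rw [min_eq_left h1, max_eq_right zero_le_one]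
    obtain ⟨q, hq⟩ := exists_polynomial_near_of_continuousOn (-M) M f hfc.continuousOn
      (1/4) (by norm_num)
    obtain ⟨K, hK⟩ := hRD q
    obtain ⟨j, hj⟩ : ∃ j : ℕ,
        C * Real.sqrt 2 * (((2^j * K + 1 : ℕ) : ℝ)) ^ D ≤ 2 ^ (2^j : ℕ) := by
      set k : ℕ := ⌈D⌉₊ with hk_def
      have hKpos : (0:ℝ) < (K:ℝ) + 1 := by positivity
      set β : ℝ := (C * Real.sqrt 2 * ((K:ℝ)+1)^k)⁻¹ with hβ_def
      have hβpos : 0 < β := by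
        rw [hβ_def]
        have h2 : (0:ℝ) < Real.sqrt 2 := by positivity
        positivity
      have htends := tendsto_pow_const_mul_const_pow_of_lt_one k
        (le_of_lt (one_half_pos (α := ℝ))) (by norm_num : (1/2:ℝ) < 1)
      obtain ⟨m₀, hm₀⟩ := eventually_atTop.mp (htends.eventually (eventually_lt_nhds hβpos))
      refine ⟨m₀, ?_⟩
      set m : ℕ := 2^m₀ with hm_def
      have hmge : m₀ ≤ m := Nat.le_of_lt Nat.lt_two_pow_self
      have h1m : (1:ℝ) ≤ (m:ℝ) := by
        have : (1:ℕ) ≤ m := Nat.one_le_two_pow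
        exact_mod_cast this
      have hmain := hm₀ m hmge
      have h2m : (0:ℝ) < 2^(m:ℕ) := by positivity
      have hx' : ((m:ℝ))^k / 2^(m:ℕ) < β := by
        rw [div_eq_mul_inv, ← inv_pow]
        simpa [one_div] using hmain
      have hxlt : ((m:ℝ))^k < β * 2^(m:ℕ) := (div_lt_iff₀ h2m).mp hx'
      have hbase1 : (1:ℝ) ≤ ((m*K+1 : ℕ) : ℝ) := by
        have : (1:ℕ) ≤ m*K+1 := Nat.le_add_left 1 _
        exact_mod_cast this
      have hcast : ((m*K+1 : ℕ) : ℝ) ≤ (m:ℝ) * ((K:ℝ)+1) := by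
        push_cast
        nlinarith [Nat.cast_nonneg (α := ℝ) K]
      have hrpow : ((m*K+1 : ℕ) : ℝ)^D ≤ ((m:ℝ))^k * ((K:ℝ)+1)^k := by
        calc ((m*K+1 : ℕ) : ℝ)^D ≤ ((m*K+1 : ℕ) : ℝ)^(k:ℝ) :=
              Real.rpow_le_rpow_of_exponent_le hbase1 (Nat.le_ceil D)
          _ = ((m*K+1 : ℕ) : ℝ)^(k:ℕ) := Real.rpow_natCast _ k
          _ ≤ ((m:ℝ) * ((K:ℝ)+1))^(k:ℕ) := pow_le_pow_left₀ (by positivity) hcast k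
          _ = ((m:ℝ))^k * ((K:ℝ)+1)^k := mul_pow _ _ _
      have hsqrt2 : (0:ℝ) < Real.sqrt 2 := by positivity
      have hfin : C * Real.sqrt 2 * (((m*K+1 : ℕ)):ℝ)^D < 2^(m:ℕ) := by
        calc C * Real.sqrt 2 * (((m*K+1 : ℕ)):ℝ)^D
            ≤ C * Real.sqrt 2 * (((m:ℝ))^k * ((K:ℝ)+1)^k) := by
              exact mul_le_mul_of_nonneg_left hrpow (by positivity)
          _ = (C * Real.sqrt 2 * ((K:ℝ)+1)^k) * ((m:ℝ))^k := by ring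
          _ < (C * Real.sqrt 2 * ((K:ℝ)+1)^k) * (β * 2^(m:ℕ)) := by
              refine mul_lt_mul_of_pos_left hxlt (by positivity)
          _ = ((C * Real.sqrt 2 * ((K:ℝ)+1)^k) * β) * 2^(m:ℕ) := by ring
          _ = 2^(m:ℕ) := by
              rw [hβ_def, mul_inv_cancel₀ (by positivity), one_mul]
      exact le_of_lt hfin
    set m : ℕ := 2^j with hm_def
    have hm0 : m ≠ 0 := by positivity
    have hlimb : (ψ (Polynomial.aeval b (q ^ (2*m)))).re ≤ (1/4:ℝ) ^ (2*m) := by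
      have he : Polynomial.aeval b (q ^ (2*m))
          = cfc (fun t => (Polynomial.eval t q)^(2*m)) b := by
        rw [map_pow]; exact aeval_pow_eq_cfc hsb q (2*m)
      rw [he]
      refine state_cfc_re_le hψ hsb ((Polynomial.continuous q).pow _) ?_
      intro t ht
      have h4 := hq t (hbIcc ht)
      rw [hf0 t ht, sub_zero] at h4
      have habs := abs_lt.mp h4
      have h5 : (Polynomial.eval t q)^2 ≤ ((1:ℝ)/4)^2 := sq_le_sq' (by linarith) (by linarith)
      calc (Polynomial.eval t q)^(2*m) = ((Polynomial.eval t q)^2)^m := by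
            rw [← pow_mul]
        _ ≤ (((1:ℝ)/4)^2)^m := pow_le_pow_left₀ (sq_nonneg _) h5 m
        _ = ((1:ℝ)/4)^(2*m) := by rw [← pow_mul]
    have hκpos : (0:ℝ) < (1/4:ℝ)^(2*m) := by positivity
    have hev2 : ∀ᶠ n in atTop,
        (φ n (Polynomial.aeval (a n) (q^(2*m)))).re < 2 * (1/4:ℝ)^(2*m) :=
      (conv (q^(2*m))).eventually (eventually_lt_nhds (by linarith))
    filter_upwards [hev2, hMn] with n h2 hMa
    haveI := hAnt n
    intro lam hlam
    by_contra hcon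
    push_neg at hcon
    have hlamIcc : lam ∈ Set.Icc (-M) M := spectrum_subset_Icc hMa hlam
    have h4 := hq lam hlamIcc
    rw [hf1 lam hcon] at h4
    have habs := abs_lt.mp h4
    have hsan : IsSelfAdjoint (Polynomial.aeval (a n) q) := isSelfAdjoint_aeval (hsa n) q
    have hnorm : ‖Polynomial.aeval (a n) q‖ ≤ 1/2 := by
      have hRDn := hK n m
      have hpownorm : ‖(Polynomial.aeval (a n) q)^m‖ = ‖Polynomial.aeval (a n) q‖ ^ m := by
        rw [hm_def]; exact norm_pow_two_pow hsan j
      have hsqrt : Real.sqrt ((φ n (Polynomial.aeval (a n) (q^(2*m)))).re)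
          ≤ Real.sqrt 2 * (1/4:ℝ)^m := by
        have hpow2 : ((1:ℝ)/4)^(2*m) = (((1:ℝ)/4)^m)^2 := by
          rw [← pow_mul, Nat.mul_comm]
        calc Real.sqrt ((φ n (Polynomial.aeval (a n) (q^(2*m)))).re)
            ≤ Real.sqrt (2 * (1/4:ℝ)^(2*m)) := Real.sqrt_le_sqrt h2.le
          _ = Real.sqrt 2 * (1/4:ℝ)^m := by
              rw [Real.sqrt_mul (by norm_num), hpow2, Real.sqrt_sq (by positivity)]
      have hchain : ‖Polynomial.aeval (a n) q‖ ^ m ≤ ((1:ℝ)/2)^m := by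
        calc ‖Polynomial.aeval (a n) q‖ ^ m = ‖(Polynomial.aeval (a n) q)^m‖ := hpownorm.symm
          _ ≤ C * (((m * K + 1 : ℕ)):ℝ)^D
              * Real.sqrt ((φ n (Polynomial.aeval (a n) (q^(2*m)))).re) := hRDn
          _ ≤ C * (((m * K + 1 : ℕ)):ℝ)^D * (Real.sqrt 2 * (1/4:ℝ)^m) := by
              refine mul_le_mul_of_nonneg_left hsqrt ?_
              positivity
          _ = (C * Real.sqrt 2 * (((m * K + 1 : ℕ)):ℝ)^D) * (1/4:ℝ)^m := by ring
          _ ≤ 2^(m:ℕ) * (1/4:ℝ)^m := by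
              refine mul_le_mul_of_nonneg_right ?_ (by positivity)
              exact hj
          _ = ((1:ℝ)/2)^m := by
              rw [← mul_pow]; norm_num
      exact le_of_pow_le_pow_left₀ hm0 (by norm_num) hchain
    have hmem : Polynomial.eval lam q ∈ spectrum ℝ (Polynomial.aeval (a n) q) := by
      have hspec : spectrum ℝ (cfc (fun t => Polynomial.eval t q) (a n))
          = (fun t => Polynomial.eval t q) '' spectrum ℝ (a n) :=
        cfc_map_spectrum (fun t => Polynomial.eval t q) (a n) (hsa n)
          (Polynomial.continuous q).continuousOn
      rw [aeval_eq_cfc (hsa n) q, hspec]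
      exact ⟨lam, hlam, rfl⟩
    have hle := spectrum.norm_le_norm_of_mem hmem
    rw [Real.norm_eq_abs] at hle
    have habs2 := abs_le.mp (hle.trans hnorm)
    linarith [habs.1, habs2.2]
  -- easy direction
  have easy : ∀ t ∈ spectrum ℝ b, ∀ ε' : ℝ, 0 < ε' →
      ∀ᶠ n in atTop, ∃ y ∈ spectrum ℝ (a n), dist t y < ε' := by
    intro t ht ε' hε'
    set g : ℝ → ℝ := fun s => max 0 (1 - (2/ε') * |s - t|) with hg_def
    have hgc : Continuous g :=
      continuous_const.max (continuous_const.sub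
        (continuous_const.mul ((continuous_id.sub continuous_const).abs)))
    have hg0 : ∀ s, 0 ≤ g s := fun s => le_max_left _ _
    have hg1 : ∀ s, g s ≤ 1 := by
      intro s
      have h0 : 0 ≤ (2/ε') * |s - t| := by positivity
      exact max_le zero_le_one (by linarith)
    have hgt : g t = 1 := by simp [hg_def]
    have hgz : ∀ s, ε'/2 ≤ |s - t| → g s = 0 := by
      intro s hs
      have h1 : (1:ℝ) ≤ (2/ε') * |s - t| := by
        calc (1:ℝ) = (2/ε') * (ε'/2) := by field_simp
          _ ≤ (2/ε') * |s - t| := mul_le_mul_of_nonneg_left hs (by positivity)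
      simp only [hg_def]
      rw [max_eq_left (by linarith)]
    have hz0 : cfc g b ≠ 0 := by
      intro h
      have hspec : spectrum ℝ (cfc g b) = g '' spectrum ℝ b :=
        cfc_map_spectrum g b hsb hgc.continuousOn
      have hmem : (1:ℝ) ∈ spectrum ℝ (cfc g b) := by
        rw [hspec]; exact ⟨t, ht, hgt⟩
      rw [h, spectrum.zero_eq] at hmem
      simp at hmem
    set c : ℝ := (ψ (cfc (fun s => g s * g s) b)).re with hc_def
    have hzsa : IsSelfAdjoint (cfc g b) := cfc_predicate g b
    have hkey : star (cfc g b) * cfc g b = cfc (fun s => g s * g s) b := by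
      rw [hzsa.star_eq, ← cfc_mul g g b hgc.continuousOn hgc.continuousOn]
    have hcpos : 0 < c := by
      have hge : 0 ≤ ψ (cfc (fun s => g s * g s) b) := by rw [← hkey]; exact hψ.2 _
      have hne : ψ (cfc (fun s => g s * g s) b) ≠ 0 := by
        rw [← hkey]; intro h; exact hz0 (hψf _ h)
      have hled := Complex.le_def.mp hge
      rcases lt_or_eq_of_le hled.1 with hlt | heq
      · simpa using hlt
      · exfalso
        apply hne
        apply Complex.ext
        · simpa using heq.symm
        · simpa using hled.2.symm
    set δ : ℝ := min (c/8) 1 with hδ_def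
    have hδpos : 0 < δ := lt_min (by linarith) one_pos
    have hδ1 : δ ≤ 1 := min_le_right _ _
    have hδc : δ ≤ c/8 := min_le_left _ _
    obtain ⟨r, hr⟩ := exists_polynomial_near_of_continuousOn (-M) M g hgc.continuousOn δ hδpos
    have hrr_cont : Continuous fun s => Polynomial.eval s r * Polynomial.eval s r :=
      (Polynomial.continuous r).mul (Polynomial.continuous r)
    have hlimlb : c - 3*δ ≤ (ψ (Polynomial.aeval b (r*r))).re := by
      rw [aeval_mul_eq_cfc r b hsb]
      have hsplit : cfc (fun s => Polynomial.eval s r * Polynomial.eval s r) b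
          = cfc (fun s => g s * g s) b
            + cfc (fun s => Polynomial.eval s r * Polynomial.eval s r - g s * g s) b := by
        rw [← cfc_add b (fun s => g s * g s) (fun s => Polynomial.eval s r * Polynomial.eval s r - g s * g s) (hgc.mul hgc).continuousOn
          (hrr_cont.sub (hgc.mul hgc)).continuousOn]
        exact cfc_congr fun s _ => by ring
      rw [hsplit, map_add, Complex.add_re]
      have hre2 : -(3*δ) ≤
          (ψ (cfc (fun s => Polynomial.eval s r * Polynomial.eval s r - g s * g s) b)).re := by
        refine state_cfc_re_ge hψ hsb (hrr_cont.sub (hgc.mul hgc)) ?_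
        intro s hs
        have h4 := abs_lt.mp (hr s (hbIcc hs))
        have hgs0 := hg0 s
        have hgs1 := hg1 s
        nlinarith [h4.1, h4.2]
      linarith
    have hev3 : ∀ᶠ n in atTop, c/2 < (φ n (Polynomial.aeval (a n) (r*r))).re := by
      refine (conv (r*r)).eventually (eventually_gt_nhds ?_)
      linarith
    filter_upwards [hev3, hMn] with n h3 hMa
    haveI := hAnt n
    by_contra hcon
    push_neg at hcon
    have hub : (φ n (Polynomial.aeval (a n) (r*r))).re ≤ c/8 := by
      rw [aeval_mul_eq_cfc r (a n) (hsa n)]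
      refine state_cfc_re_le (hφ n) (hsa n) hrr_cont ?_
      intro s hs
      have hgs : g s = 0 := by
        apply hgz
        have hd := hcon s hs
        rw [Real.dist_eq, abs_sub_comm] at hd
        linarith
      have h4 := abs_lt.mp (hr s (spectrum_subset_Icc hMa hs))
      rw [hgs, sub_zero] at h4
      nlinarith [h4.1, h4.2]
    linarith
  refine Metric.tendsto_nhds.mpr ?_
  intro ε hε
  obtain ⟨T, hTsub, hTfin, hTcover⟩ :=
    (spectrum.isCompact (𝕜 := ℝ) b).finite_cover_balls (show (0:ℝ) < ε/4 by linarith)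
  have hhard := hard (ε/4) (by linarith)
  have heasyT : ∀ᶠ n in atTop, ∀ t ∈ T, ∃ y ∈ spectrum ℝ (a n), dist t y < ε/4 := by
    rw [eventually_all_finite hTfin]
    intro t htT
    exact easy t (hTsub htT) (ε/4) (by linarith)
  filter_upwards [hhard, heasyT] with n h1 h2
  have hdle : Metric.hausdorffDist (spectrum ℝ (a n)) (spectrum ℝ b) ≤ ε/2 := by
    apply Metric.hausdorffDist_le_of_mem_dist (by linarith)
    · intro lam hlam
      obtain ⟨y, hy, hdy⟩ := (Metric.infDist_lt_iff hbne).mp (h1 lam hlam)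
      exact ⟨y, hy, by linarith⟩
    · intro s hs
      obtain ⟨t, htT, hst⟩ := Set.mem_iUnion₂.mp (hTcover hs)
      obtain ⟨y, hy, hty⟩ := h2 t htT
      refine ⟨y, hy, ?_⟩
      have h5 : dist s t < ε/4 := Metric.mem_ball.mp hst
      calc dist s y ≤ dist s t + dist t y := dist_triangle _ _ _
        _ ≤ ε/2 := by linarith
  rw [Real.dist_eq, sub_zero, abs_of_nonneg Metric.hausdorffDist_nonneg]
  linarith

end SHC4

/-- Uniform RD property together with convergence in non-commutative *-distribution implies
convergence in Hausdorff distance of the spectra of self-adjoint polynomials. -/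
theorem spectra_hausdorff_convergence_of_uniformRD
    (d : ℕ) (hd : 1 ≤ d)
    (A : ℕ → Type*) [∀ n, CStarAlgebra (A n)]
    (B : Type*) [CStarAlgebra B]
    (φ : ∀ n, A n →ₗ[ℂ] ℂ) (ψ : B →ₗ[ℂ] ℂ)
    (hφ : ∀ n, IsState (φ n)) (hφf : ∀ n, IsFaithful (φ n))
    (hψ : IsState ψ) (hψf : IsFaithful ψ)
    (X : ∀ n, Fin d → A n) (Y : Fin d → B)
    (hRD : ∃ C D : ℝ, 0 < C ∧ 0 < D ∧ ∀ n : ℕ, ∀ P : List (Fin d × Bool) →₀ ℂ,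
      ‖evalPoly P (X n)‖ ≤
        C * ((degPoly P : ℝ) + 1) ^ D *
          Real.sqrt ((φ n (star (evalPoly P (X n)) * evalPoly P (X n))).re))
    (hconv : ∀ P : List (Fin d × Bool) →₀ ℂ,
      Tendsto (fun n => φ n (evalPoly P (X n))) atTop (nhds (ψ (evalPoly P Y)))) :
    ∀ P : List (Fin d × Bool) →₀ ℂ, IsSelfAdjointPoly P →
      Tendsto
        (fun n => Metric.hausdorffDist (spectrum ℝ (evalPoly P (X n))) (spectrum ℝ (evalPoly P Y)))
        atTop (nhds 0) := by
  intro P hP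
  obtain ⟨C, D, hC, hD, hRD⟩ := hRD
  classical
  have hsaP : ∀ n, IsSelfAdjoint (evalPoly P (X n)) :=
    fun n => SHC2.isSelfAdjoint_evalPoly (X n) hP
  have hsbP : IsSelfAdjoint (evalPoly P Y) := SHC2.isSelfAdjoint_evalPoly Y hP
  have conv : ∀ q : Polynomial ℝ,
      Tendsto (fun n => (φ n (Polynomial.aeval (evalPoly P (X n)) q)).re) atTop
        (nhds ((ψ (Polynomial.aeval (evalPoly P Y) q)).re)) := by
    intro q
    have h := hconv (SHC.ofMA (Polynomial.aeval (SHC.toMA P) q))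
    simp only [SHC.evalPoly_ofMA, SHC3.evalPoly_aeval, SHC.evalPoly_toMA] at h
    exact (Complex.continuous_re.tendsto _).comp h
  have hRD' : ∀ q : Polynomial ℝ, ∃ K : ℕ, ∀ n m : ℕ,
      ‖(Polynomial.aeval (evalPoly P (X n)) q) ^ m‖ ≤ C * (((m * K + 1 : ℕ) : ℝ)) ^ D *
        Real.sqrt ((φ n (Polynomial.aeval (evalPoly P (X n)) (q ^ (2*m)))).re) := by
    intro q
    set S : MonoidAlgebra ℂ (FreeMonoid (Fin d × Bool)) :=
      Polynomial.aeval (SHC.toMA P) q with hS_def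
    refine ⟨degPoly S.coeff, ?_⟩
    intro n m
    have hid : ∀ k : ℕ,
        evalPoly (S ^ k).coeff (X n)
          = (Polynomial.aeval (evalPoly P (X n)) q) ^ k := by
      intro k
      rw [SHC.evalPoly_pow (X n) S k, hS_def, SHC3.evalPoly_aeval (X n),
        SHC.evalPoly_toMA (X n)]
    have h := hRD n (SHC.ofMA (S ^ m))
    rw [SHC.degPoly_ofMA] at h
    rw [show evalPoly (SHC.ofMA (S^m)) (X n) = evalPoly (S^m).coeff (X n) from rfl] at h
    rw [hid m] at h
    have hsel : IsSelfAdjoint ((Polynomial.aeval (evalPoly P (X n)) q) ^ m) :=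
      (SHC4.isSelfAdjoint_aeval (hsaP n) q).pow m
    rw [hsel.star_eq, ← pow_add] at h
    have hmm : (Polynomial.aeval (evalPoly P (X n)) q)^(m+m)
        = Polynomial.aeval (evalPoly P (X n)) (q^(2*m)) := by
      rw [map_pow, two_mul]
    rw [hmm] at h
    have h0 := SHC.degPoly_pow S m
    have hdeg : ((degPoly (S^m : MonoidAlgebra ℂ (FreeMonoid (Fin d × Bool))).coeff : ℝ) + 1)
        ≤ ((m * degPoly S.coeff + 1 : ℕ) : ℝ) := by
      have h0' : ((degPoly (S^m : MonoidAlgebra ℂ (FreeMonoid (Fin d × Bool))).coeff : ℕ):ℝ)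
          ≤ ((m * degPoly S.coeff : ℕ):ℝ) := by exact_mod_cast h0
      push_cast at h0' ⊢
      linarith
    have hrp : ((degPoly (S^m : MonoidAlgebra ℂ (FreeMonoid (Fin d × Bool))).coeff : ℝ) + 1) ^ D
        ≤ (((m * degPoly S.coeff + 1:ℕ)):ℝ) ^ D :=
      Real.rpow_le_rpow (by positivity) hdeg hD.le
    calc ‖(Polynomial.aeval (evalPoly P (X n)) q) ^ m‖
        ≤ C * ((degPoly (S^m : MonoidAlgebra ℂ (FreeMonoid (Fin d × Bool))).coeff : ℝ) + 1) ^ D *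
          Real.sqrt ((φ n (Polynomial.aeval (evalPoly P (X n)) (q ^ (2*m)))).re) := h
      _ ≤ C * (((m * degPoly S.coeff + 1:ℕ)):ℝ) ^ D *
          Real.sqrt ((φ n (Polynomial.aeval (evalPoly P (X n)) (q ^ (2*m)))).re) := by
          exact mul_le_mul_of_nonneg_right (mul_le_mul_of_nonneg_left hrp hC.le)
            (Real.sqrt_nonneg _)
  exact SHC4.aux φ ψ hφ hψ hψf (fun n => evalPoly P (X n)) (evalPoly P Y) hsaP hsbP
    C D hC hD hRD' conv
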